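/- If the translation operators on a graph form a semigroup, i.e., for all i, j there exists i∙j with T_i T_j = T_{i∙j}, then |φ_k(n)| = 1/√N for all k and n; equivalently, √N Φ is a (complex) Hadamard matrix. -/

import Mathlib

/-- The graph Fourier transform of `f` w.r.t. the eigenbasis `φ`. -/
noncomputable def gft {N : ℕ} (φ : Fin N → Fin N → ℂ) (f : Fin N → ℂ) (k : Fin N) : ℂ :=
  ∑ m, f m * star (φ k m)

/-- Graph translation: `(T_i f)(n) = √N Σ_k f̂(λ_k) φ_k*(i) φ_k(n)`. -/
noncomputable def gtrans {N : ℕ} (φ : Fin N → Fin N → ℂ) (i : Fin N) (f : Fin N → ℂ) :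
    Fin N → ℂ :=
  fun n => (Real.sqrt N : ℂ) * ∑ k, gft φ f k * star (φ k i) * φ k n

private lemma key_real (N : ℕ) (hN : 0 < N) (a : Fin N → ℝ) (ha : ∀ n, 0 ≤ a n)
    (hsum : ∑ n, a n ^ 2 = 1)
    (hmul : ∀ i j : Fin N, ∃ t, Real.sqrt N * a i * a j = a t) :
    ∀ n, a n = 1 / Real.sqrt N := by
  have hN' : (0:ℝ) < N := by exact_mod_cast hN
  have hs : (0:ℝ) < Real.sqrt N := Real.sqrt_pos.2 hN'
  haveI : NeZero N := ⟨hN.ne'⟩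
  obtain ⟨n0, -, hmax⟩ := Finset.exists_max_image Finset.univ a ⟨0, Finset.mem_univ 0⟩
  have hmax' : ∀ n, a n ≤ a n0 := fun n => hmax n (Finset.mem_univ n)
  have hub : (1:ℝ) ≤ N * a n0 ^ 2 := by
    rw [← hsum]
    calc ∑ n : Fin N, a n ^ 2 ≤ ∑ _n : Fin N, a n0 ^ 2 :=
          Finset.sum_le_sum fun n _ => pow_le_pow_left₀ (ha n) (hmax' n) 2
      _ = N * a n0 ^ 2 := by simp [mul_comm]
  -- lower bound on the max
  have hge : 1 / Real.sqrt N ≤ a n0 := by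
    have hsq : (1 / Real.sqrt N) ^ 2 ≤ a n0 ^ 2 := by
      rw [div_pow, one_pow, Real.sq_sqrt hN'.le, div_le_iff₀ hN']
      linarith
    calc 1 / Real.sqrt N = Real.sqrt ((1 / Real.sqrt N) ^ 2) :=
          (Real.sqrt_sq (by positivity)).symm
      _ ≤ Real.sqrt (a n0 ^ 2) := Real.sqrt_le_sqrt hsq
      _ = a n0 := Real.sqrt_sq (ha n0)
  -- the max is positive
  have hpos : 0 < a n0 := lt_of_lt_of_le (by positivity) hge
  -- upper bound on the max
  have hle : a n0 ≤ 1 / Real.sqrt N := by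
    obtain ⟨t, ht⟩ := hmul n0 n0
    have h1 : Real.sqrt N * a n0 * a n0 ≤ a n0 := ht ▸ hmax' t
    have h2 : Real.sqrt N * a n0 ≤ 1 := by
      have := mul_le_mul_of_nonneg_right (le_refl (1 : ℝ)) hpos.le
      nlinarith
    calc a n0 = (Real.sqrt N * a n0) / Real.sqrt N := by field_simp
      _ ≤ 1 / Real.sqrt N := by gcongr
  have hM : a n0 = 1 / Real.sqrt N := le_antisymm hle hge
  -- all entries equal the max
  intro n
  by_contra hne
  have hlt : a n ^ 2 < 1 / N := by
    have h1 : a n < 1 / Real.sqrt N := lt_of_le_of_ne (hM ▸ hmax' n) hne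
    have : a n ^ 2 < (1 / Real.sqrt N) ^ 2 := by
      apply pow_lt_pow_left₀ h1 (ha n)
      norm_num
    simpa [div_pow, Real.sq_sqrt hN'.le] using this
  have hall : ∀ m : Fin N, a m ^ 2 ≤ 1 / N := by
    intro m
    have h1 : a m ≤ 1 / Real.sqrt N := hM ▸ hmax' m
    have : a m ^ 2 ≤ (1 / Real.sqrt N) ^ 2 := pow_le_pow_left₀ (ha m) h1 2
    simpa [div_pow, Real.sq_sqrt hN'.le] using this
  have : (1:ℝ) < 1 := by
    calc (1:ℝ) = ∑ m, a m ^ 2 := hsum.symm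
      _ < ∑ _m : Fin N, (1 / N : ℝ) :=
          Finset.sum_lt_sum (fun m _ => hall m) ⟨n, Finset.mem_univ n, hlt⟩
      _ = 1 := by rw [Finset.sum_const, Finset.card_univ, Fintype.card_fin, nsmul_eq_mul]; exact mul_one_div_cancel hN'.ne'
  exact lt_irrefl 1 this

private lemma gtrans_eigen {N : ℕ} {φ : Fin N → Fin N → ℂ}
    (horth : ∀ k l, (∑ n, φ k n * star (φ l n)) = if k = l then (1 : ℂ) else 0)
    (j l : Fin N) (n : Fin N) :
    gtrans φ j (φ l) n = (Real.sqrt N : ℂ) * (star (φ l j) * φ l n) := by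
  unfold gtrans
  congr 1
  have h : ∀ k : Fin N, gft φ (φ l) k * star (φ k j) * φ k n
      = if l = k then star (φ l j) * φ l n else 0 := by
    intro k
    unfold gft
    rw [horth l k]
    by_cases h : l = k
    · subst h; simp
    · simp [h]
  rw [Finset.sum_congr rfl fun k _ => h k, Finset.sum_ite_eq]
  simp

private lemma gtrans_gtrans_eigen {N : ℕ} {φ : Fin N → Fin N → ℂ}
    (horth : ∀ k l, (∑ n, φ k n * star (φ l n)) = if k = l then (1 : ℂ) else 0)
    (i j l : Fin N) (n : Fin N) :
    gtrans φ i (gtrans φ j (φ l)) n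
      = (N : ℂ) * (star (φ l i) * star (φ l j) * φ l n) := by
  have hgft : ∀ k : Fin N, gft φ (gtrans φ j (φ l)) k
      = (Real.sqrt N : ℂ) * star (φ l j) * (if l = k then 1 else 0) := by
    intro k
    unfold gft
    calc ∑ m, gtrans φ j (φ l) m * star (φ k m)
        = (Real.sqrt N : ℂ) * star (φ l j) * ∑ m, φ l m * star (φ k m) := by
          rw [Finset.mul_sum]
          exact Finset.sum_congr rfl fun m _ => by rw [gtrans_eigen horth]; ring
      _ = (Real.sqrt N : ℂ) * star (φ l j) * (if l = k then 1 else 0) := by rw [horth l k]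
  show (Real.sqrt N : ℂ) * ∑ k, gft φ (gtrans φ j (φ l)) k * star (φ k i) * φ k n = _
  have h : ∀ k : Fin N, gft φ (gtrans φ j (φ l)) k * star (φ k i) * φ k n
      = if l = k then (Real.sqrt N : ℂ) * star (φ l j) * (star (φ l i) * φ l n) else 0 := by
    intro k
    rw [hgft k]
    by_cases h : l = k
    · subst h; simp; ring
    · simp [h]
  rw [Finset.sum_congr rfl fun k _ => h k, Finset.sum_ite_eq]
  have hNN : (Real.sqrt N : ℂ) * (Real.sqrt N : ℂ) = (N : ℂ) := by
    rw [← Complex.ofReal_mul, Real.mul_self_sqrt (Nat.cast_nonneg N)]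
    norm_num
  simp only [Finset.mem_univ, if_true]
  calc (Real.sqrt N : ℂ) * ((Real.sqrt N : ℂ) * star (φ l j) * (star (φ l i) * φ l n))
      = (Real.sqrt N : ℂ) * (Real.sqrt N : ℂ) * (star (φ l i) * star (φ l j) * φ l n) := by ring
    _ = _ := by rw [hNN]

/-- If the translation operators form a semigroup, i.e. for all `i, j`
there is `i∙j` with `T_i T_j = T_{i∙j}`, then all eigenvector entries have modulus
`1/√N`; equivalently `√N Φ` is a complex Hadamard matrix. -/
theorem semigroup_implies_hadamard (N : ℕ) (hN : 0 < N) (G : SimpleGraph (Fin N))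
    [DecidableRel G.Adj]
    (φ : Fin N → Fin N → ℂ) (μ : Fin N → ℝ)
    (heig : ∀ k, (G.lapMatrix ℂ).mulVec (φ k) = (μ k : ℂ) • φ k)
    (horth : ∀ k l, (∑ n, φ k n * star (φ l n)) = if k = l then (1 : ℂ) else 0)
    (hsemi : ∃ op : Fin N → Fin N → Fin N,
      ∀ i j f, gtrans φ i (gtrans φ j f) = gtrans φ (op i j) f) :
    ∀ k n, ‖φ k n‖ = 1 / Real.sqrt N := by
  obtain ⟨op, hop⟩ := hsemi
  intro k
  set a : Fin N → ℝ := fun n => ‖φ k n‖ with ha_def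
  have ha : ∀ n, 0 ≤ a n := fun n => norm_nonneg _
  -- sum of squares is 1
  have hsum : ∑ n, a n ^ 2 = 1 := by
    have h := horth k k
    rw [if_pos rfl] at h
    have h2 : (↑(∑ n, a n ^ 2) : ℂ) = 1 := by
      rw [Complex.ofReal_sum]
      rw [← h]
      refine Finset.sum_congr rfl fun n _ => ?_
      rw [show star (φ k n) = starRingEnd ℂ (φ k n) from rfl, Complex.mul_conj,
        ← Complex.sq_norm]
    exact_mod_cast h2
  -- there is a nonzero entry
  have hnz : ∃ n0, φ k n0 ≠ 0 := by
    by_contra h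
    push_neg at h
    have h1 := horth k k
    simp [h] at h1
  obtain ⟨n0, hn0⟩ := hnz
  -- the multiplicative relation
  have hmul : ∀ i j : Fin N, ∃ t, Real.sqrt N * a i * a j = a t := by
    intro i j
    refine ⟨op i j, ?_⟩
    have heq := congrFun (hop i j (φ k)) n0
    rw [gtrans_gtrans_eigen horth, gtrans_eigen horth] at heq
    have hC : (N : ℂ) * (star (φ k i) * star (φ k j))
        = (Real.sqrt N : ℂ) * star (φ k (op i j)) := by
      apply mul_right_cancel₀ hn0
      calc (N : ℂ) * (star (φ k i) * star (φ k j)) * φ k n0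
          = (N : ℂ) * (star (φ k i) * star (φ k j) * φ k n0) := by ring
        _ = (Real.sqrt N : ℂ) * (star (φ k (op i j)) * φ k n0) := heq
        _ = (Real.sqrt N : ℂ) * star (φ k (op i j)) * φ k n0 := by ring
    have habs := congrArg (‖·‖) hC
    simp only [norm_mul, Complex.norm_natCast, Complex.norm_real, Real.norm_eq_abs,
      show ∀ z : ℂ, star z = starRingEnd ℂ z from fun _ => rfl, Complex.norm_conj,
      abs_of_nonneg (Real.sqrt_nonneg (N:ℝ))] at habs
    have hNr : (N:ℝ) = Real.sqrt N * Real.sqrt N :=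
      (Real.mul_self_sqrt (by positivity)).symm
    have hs : Real.sqrt (N:ℝ) ≠ 0 := ne_of_gt (Real.sqrt_pos.2 (by exact_mod_cast hN))
    apply mul_left_cancel₀ hs
    calc Real.sqrt N * (Real.sqrt N * a i * a j)
        = (Real.sqrt N * Real.sqrt N) * (‖φ k i‖ * ‖φ k j‖) := by ring
      _ = (N:ℝ) * (‖φ k i‖ * ‖φ k j‖) := by rw [← hNr]
      _ = Real.sqrt N * ‖φ k (op i j)‖ := habs
      _ = Real.sqrt N * a (op i j) := rfl
  have := key_real N hN a ha hsum hmul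
  exact this
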